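/- Extremal members exist on both sides of the fairness–accuracy tradeoff: let S, A finite, q(s,a) = p(s)m(a) with all masses positive, and f : S → A → (0,1) non-constant in s for some a. Then the minimum over all rules h : S × A → (0,1) of E_q[KL(Bern(f(S,A)) ‖ Bern(h(S,A)))] is 0 (attained uniquely by h = f), while the minimum over EO-fair rules (h constant in s) is Σ_{s,a} q(s,a) KL(Bern(f(s,a)) ‖ Bern(f_eo(a))), which is strictly positive. Hence imposing the EO constraint strictly increases the best attainable KL loss whenever the ML predictor actually uses the sensitive attribute. -/

import Mathlib

open Finset

/-- KL divergence between Bernoulli distributions with parameters `x` and `y`. -/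
noncomputable def klBern (x y : ℝ) : ℝ :=
  x * Real.log (x / y) + (1 - x) * Real.log ((1 - x) / (1 - y))


lemma klBern_self (x : ℝ) : klBern x x = 0 := by
  unfold klBern
  rcases eq_or_ne x 0 with h | h
  · simp [h]
  rcases eq_or_ne x 1 with h1 | h1
  · simp [h1]
  · rw [div_self h, div_self (sub_ne_zero.mpr (Ne.symm h1)), Real.log_one]; ring

lemma klBern_nonneg {x y : ℝ} (hx0 : 0 < x) (hx1 : x < 1) (hy0 : 0 < y) (hy1 : y < 1) :
    0 ≤ klBern x y := by
  have h1 : Real.log (y / x) ≤ y / x - 1 :=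
    Real.log_le_sub_one_of_pos (div_pos hy0 hx0)
  have h2 : Real.log ((1 - y) / (1 - x)) ≤ (1 - y) / (1 - x) - 1 :=
    Real.log_le_sub_one_of_pos (div_pos (by linarith) (by linarith))
  have e1 : Real.log (x / y) = -Real.log (y / x) := by
    rw [← Real.log_inv]; congr 1; field_simp
  have e2 : Real.log ((1 - x) / (1 - y)) = -Real.log ((1 - y) / (1 - x)) := by
    rw [← Real.log_inv]; congr 1; field_simp
  unfold klBern
  rw [e1, e2]
  have b1 : x * Real.log (y / x) ≤ y - x := by
    calc x * Real.log (y / x) ≤ x * (y / x - 1) := by nlinarith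
    _ = y - x := by field_simp
  have b2 : (1 - x) * Real.log ((1 - y) / (1 - x)) ≤ x - y := by
    have hx : (1:ℝ) - x ≠ 0 := by linarith
    calc (1 - x) * Real.log ((1 - y) / (1 - x)) ≤ (1 - x) * ((1 - y) / (1 - x) - 1) := by nlinarith
    _ = x - y := by field_simp; ring
  nlinarith

lemma klBern_pos {x y : ℝ} (hx0 : 0 < x) (hx1 : x < 1) (hy0 : 0 < y) (hy1 : y < 1)
    (hne : x ≠ y) : 0 < klBern x y := by
  have hd : y / x ≠ 1 := by
    intro h; exact hne ((div_eq_one_iff_eq hx0.ne').mp h).symm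
  have h1 : Real.log (y / x) < y / x - 1 :=
    Real.log_lt_sub_one_of_pos (div_pos hy0 hx0) hd
  have h2 : Real.log ((1 - y) / (1 - x)) ≤ (1 - y) / (1 - x) - 1 :=
    Real.log_le_sub_one_of_pos (div_pos (by linarith) (by linarith))
  have e1 : Real.log (x / y) = -Real.log (y / x) := by
    rw [← Real.log_inv]; congr 1; field_simp
  have e2 : Real.log ((1 - x) / (1 - y)) = -Real.log ((1 - y) / (1 - x)) := by
    rw [← Real.log_inv]; congr 1; field_simp
  unfold klBern
  rw [e1, e2]
  have b1 : x * Real.log (y / x) < y - x := by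
    calc x * Real.log (y / x) < x * (y / x - 1) := by nlinarith
    _ = y - x := by field_simp
  have b2 : (1 - x) * Real.log ((1 - y) / (1 - x)) ≤ x - y := by
    have hx : (1:ℝ) - x ≠ 0 := by linarith
    calc (1 - x) * Real.log ((1 - y) / (1 - x)) ≤ (1 - x) * ((1 - y) / (1 - x) - 1) := by nlinarith
    _ = x - y := by field_simp; ring
  nlinarith

lemma klBern_shift {x g h : ℝ} (hx0 : 0 < x) (hx1 : x < 1) (hg0 : 0 < g) (hg1 : g < 1)
    (hh0 : 0 < h) (hh1 : h < 1) :
    klBern x h = klBern x g + (x * Real.log (g / h) + (1 - x) * Real.log ((1 - g) / (1 - h))) := by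
  unfold klBern
  have e1 : Real.log (x / h) = Real.log (x / g) + Real.log (g / h) := by
    rw [← Real.log_mul (by positivity) (by positivity)]
    congr 1; field_simp
  have hx' : (0:ℝ) < 1 - x := by linarith
  have hg' : (0:ℝ) < 1 - g := by linarith
  have hh' : (0:ℝ) < 1 - h := by linarith
  have e2 : Real.log ((1 - x) / (1 - h)) =
      Real.log ((1 - x) / (1 - g)) + Real.log ((1 - g) / (1 - h)) := by
    rw [← Real.log_mul (div_pos hx' hg').ne' (div_pos hg' hh').ne']
    congr 1
    field_simp
  rw [e1, e2]; ring

theorem eo_constraint_strictly_costly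
    {S A : Type} [Fintype S] [Fintype A]
    (p : S → ℝ) (hp : ∀ s, 0 < p s) (hpsum : ∑ s, p s = 1)
    (m : A → ℝ) (hm : ∀ a, 0 < m a) (hmsum : ∑ a, m a = 1)
    (q : S → A → ℝ) (hq : ∀ s a, q s a = p s * m a)
    (f : S → A → ℝ) (hf0 : ∀ s a, 0 < f s a) (hf1 : ∀ s a, f s a < 1)
    (hnc : ∃ (a : A) (s s' : S), f s a ≠ f s' a)
    (feo : A → ℝ) (hfeo : ∀ a, feo a = ∑ s, p s * f s a) :
    -- the unconstrained minimum is 0, attained uniquely by h = f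
    ((∑ s, ∑ a, q s a * klBern (f s a) (f s a)) = 0 ∧
      (∀ h : S → A → ℝ, (∀ s a, 0 < h s a) → (∀ s a, h s a < 1) →
        0 ≤ ∑ s, ∑ a, q s a * klBern (f s a) (h s a) ∧
        ((∑ s, ∑ a, q s a * klBern (f s a) (h s a)) = 0 → ∀ s a, h s a = f s a))) ∧
    -- the minimum over EO-fair rules is attained at f_eo
    (∀ h : A → ℝ, (∀ a, 0 < h a) → (∀ a, h a < 1) →
      (∑ s, ∑ a, q s a * klBern (f s a) (feo a)) ≤
        ∑ s, ∑ a, q s a * klBern (f s a) (h a)) ∧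
    -- and it is strictly positive
    0 < ∑ s, ∑ a, q s a * klBern (f s a) (feo a) := by
  have hqpos : ∀ s a, 0 < q s a := fun s a => by rw [hq]; exact mul_pos (hp s) (hm a)
  have hSne : (Finset.univ : Finset S).Nonempty := by
    by_contra h
    rw [Finset.not_nonempty_iff_eq_empty] at h
    rw [h, Finset.sum_empty] at hpsum
    norm_num at hpsum
  have hfeo0 : ∀ a, 0 < feo a := fun a => by
    rw [hfeo]; exact Finset.sum_pos (fun s _ => mul_pos (hp s) (hf0 s a)) hSne
  have hfeo1 : ∀ a, feo a < 1 := fun a => by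
    rw [hfeo]
    calc ∑ s, p s * f s a < ∑ s, p s :=
          Finset.sum_lt_sum_of_nonempty hSne (fun s _ => by nlinarith [hp s, hf1 s a])
      _ = 1 := hpsum
  refine ⟨⟨by simp [klBern_self], ?_⟩, ?_, ?_⟩
  · intro h hh0 hh1
    have hterm : ∀ s a, 0 ≤ q s a * klBern (f s a) (h s a) := fun s a =>
      mul_nonneg (hqpos s a).le
        (klBern_nonneg (hf0 s a) (hf1 s a) (hh0 s a) (hh1 s a))
    refine ⟨Finset.sum_nonneg fun s _ => Finset.sum_nonneg fun a _ => hterm s a, ?_⟩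
    intro hsum s a
    have h1 : ∀ s ∈ Finset.univ, (∑ a, q s a * klBern (f s a) (h s a)) = 0 :=
      (Finset.sum_eq_zero_iff_of_nonneg
        (fun s _ => Finset.sum_nonneg fun a _ => hterm s a)).mp hsum
    have h2 : q s a * klBern (f s a) (h s a) = 0 :=
      (Finset.sum_eq_zero_iff_of_nonneg (fun a _ => hterm s a)).mp
        (h1 s (Finset.mem_univ s)) a (Finset.mem_univ a)
    have h3 : klBern (f s a) (h s a) = 0 := by
      rcases mul_eq_zero.mp h2 with h' | h'
      · exact absurd h' (hqpos s a).ne'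
      · exact h'
    by_contra hcon
    exact absurd h3
      (klBern_pos (hf0 s a) (hf1 s a) (hh0 s a) (hh1 s a) (fun e => hcon e.symm)).ne'
  · intro h hh0 hh1
    have step : ∀ s a, q s a * klBern (f s a) (h a) =
        q s a * klBern (f s a) (feo a) +
        q s a * (f s a * Real.log (feo a / h a) +
          (1 - f s a) * Real.log ((1 - feo a) / (1 - h a))) := by
      intro s a
      rw [klBern_shift (hf0 s a) (hf1 s a) (hfeo0 a) (hfeo1 a) (hh0 a) (hh1 a)]; ring
    have inner : ∀ a : A,
        (∑ s, q s a * (f s a * Real.log (feo a / h a) +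
          (1 - f s a) * Real.log ((1 - feo a) / (1 - h a)))) = m a * klBern (feo a) (h a) := by
      intro a
      have e : ∀ s, q s a * (f s a * Real.log (feo a / h a) +
          (1 - f s a) * Real.log ((1 - feo a) / (1 - h a)))
          = (m a * Real.log (feo a / h a)) * (p s * f s a)
            + (m a * Real.log ((1 - feo a) / (1 - h a))) * (p s - p s * f s a) := by
        intro s; rw [hq]; ring
      rw [Finset.sum_congr rfl (fun s _ => e s), Finset.sum_add_distrib,
        ← Finset.mul_sum, ← Finset.mul_sum, Finset.sum_sub_distrib, hpsum, ← hfeo a]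
      unfold klBern
      ring
    have key : (∑ s, ∑ a, q s a * klBern (f s a) (h a)) =
        (∑ s, ∑ a, q s a * klBern (f s a) (feo a)) + ∑ a, m a * klBern (feo a) (h a) := by
      simp_rw [step, Finset.sum_add_distrib]
      congr 1
      rw [Finset.sum_comm]
      exact Finset.sum_congr rfl fun a _ => inner a
    rw [key]
    have : 0 ≤ ∑ a, m a * klBern (feo a) (h a) :=
      Finset.sum_nonneg fun a _ => mul_nonneg (hm a).le
        (klBern_nonneg (hfeo0 a) (hfeo1 a) (hh0 a) (hh1 a))
    linarith
  · obtain ⟨a0, s1, s2, hne⟩ := hnc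
    obtain ⟨s0, hs0⟩ : ∃ s0, f s0 a0 ≠ feo a0 := by
      by_contra hcon
      push_neg at hcon
      exact hne ((hcon s1).trans (hcon s2).symm)
    have hterm : ∀ s a, 0 ≤ q s a * klBern (f s a) (feo a) := fun s a =>
      mul_nonneg (hqpos s a).le
        (klBern_nonneg (hf0 s a) (hf1 s a) (hfeo0 a) (hfeo1 a))
    refine Finset.sum_pos' (fun s _ => Finset.sum_nonneg fun a _ => hterm s a)
      ⟨s0, Finset.mem_univ _, ?_⟩
    exact Finset.sum_pos' (fun a _ => hterm s0 a)
      ⟨a0, Finset.mem_univ _, mul_pos (hqpos s0 a0)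
        (klBern_pos (hf0 s0 a0) (hf1 s0 a0) (hfeo0 a0) (hfeo1 a0) hs0)⟩
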